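/- Let k be a field of characteristic p ≥ 5 and A = k[x,y]/(x^p, y^p). Regard A as a module over the Lie algebra Der(A) of all derivations of A (a derivation D acts on f ∈ A by D(f)). Then the only Der(A)-submodules of A are 0, the one-dimensional subspace k·1 of constants, and A itself. Consequently, the quotient module A/(k·1) is a simple Der(A)-module of dimension p² - 1. -/

import Mathlib

open MvPolynomial

set_option synthInstance.maxHeartbeats 1000000
set_option maxHeartbeats 1000000

/-- The ideal `(x^p, y^p)` of `k[x,y]`. -/
noncomputable abbrev TruncIdeal (k : Type*) [Field k] (p : ℕ) : Ideal (MvPolynomial (Fin 2) k) :=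
  Ideal.span {X 0 ^ p, X 1 ^ p}

/-- The truncated polynomial algebra `A = k[x,y]/(x^p, y^p)`. -/
noncomputable abbrev TruncA (k : Type*) [Field k] (p : ℕ) :=
  MvPolynomial (Fin 2) k ⧸ TruncIdeal k p

set_option linter.unusedSectionVars false

namespace Stmt14Aux

open Finsupp

variable {k : Type*} [Field k] {p : ℕ}

/-- Every `Fin 2 →₀ ℕ` is a sum of two singles. -/
lemma fin2_eq (m : Fin 2 →₀ ℕ) : m = single 0 (m 0) + single 1 (m 1) := by
  ext a
  fin_cases a <;> simp

lemma fin2_or (l : Fin 2) : l = 0 ∨ l = 1 := by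
  fin_cases l
  · exact Or.inl rfl
  · exact Or.inr rfl

lemma coeff_pderiv (i : Fin 2) (f : MvPolynomial (Fin 2) k) (m : Fin 2 →₀ ℕ) :
    coeff m (pderiv i f) = ((m i + 1 : ℕ) : k) * coeff (m + single i 1) f := by
  induction f using MvPolynomial.induction_on' with
  | monomial s a =>
    rw [pderiv_monomial]
    classical
    rcases eq_or_ne s (m + single i 1) with rfl | hne
    · have h1 : single i 1 ≤ m + single i 1 := le_add_self
      rw [coeff_monomial, coeff_monomial, if_pos, if_pos rfl]
      · push_cast
        simp [mul_comm]
      · rw [add_tsub_cancel_right]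
    · rw [coeff_monomial, coeff_monomial, if_neg hne]
      rcases Nat.eq_zero_or_pos (s i) with h0 | hpos
      · split_ifs <;> simp [h0]
      · rw [if_neg, mul_zero]
        intro hEq
        apply hne
        rw [← hEq, tsub_add_cancel_of_le]
        rwa [Finsupp.single_le_iff]
  | add f g hf hg =>
    simp [hf, hg, mul_add]

lemma coeff_pderiv_iterate (i : Fin 2) (n : ℕ) (f : MvPolynomial (Fin 2) k) (m : Fin 2 →₀ ℕ) :
    coeff m ((pderiv i)^[n] f) =
      (∏ t ∈ Finset.range n, ((m i + t + 1 : ℕ) : k)) * coeff (m + single i n) f := by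
  induction n generalizing f m with
  | zero => simp
  | succ n ih =>
    rw [Function.iterate_succ_apply, ih, coeff_pderiv]
    have h1 : (m + single i n) i = m i + n := by simp
    have h2 : m + single i n + single i 1 = m + single i (n + 1) := by
      rw [add_assoc, ← Finsupp.single_add]
    rw [h2, Finset.prod_range_succ, h1, mul_assoc]


lemma coeff_D2 (n0 n1 : ℕ) (f : MvPolynomial (Fin 2) k) (m : Fin 2 →₀ ℕ) :
    coeff m ((pderiv (0 : Fin 2))^[n0] ((pderiv (1 : Fin 2))^[n1] f)) =
      (∏ t ∈ Finset.range n0, ((m 0 + t + 1 : ℕ) : k)) *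
        ((∏ t ∈ Finset.range n1, ((m 1 + t + 1 : ℕ) : k)) *
          coeff (m + single 0 n0 + single 1 n1) f) := by
  rw [coeff_pderiv_iterate, coeff_pderiv_iterate]
  have h1 : (m + single (0 : Fin 2) n0) (1 : Fin 2) = m 1 := by simp
  rw [h1]

variable [Fact p.Prime] [CharP k p]

lemma factor_ne_zero {a n : ℕ} (h : a + n < p) :
    (∏ t ∈ Finset.range n, ((a + t + 1 : ℕ) : k)) ≠ 0 := by
  rw [Finset.prod_ne_zero_iff]
  intro t ht
  rw [Finset.mem_range] at ht
  rw [Ne, CharP.cast_eq_zero_iff k p]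
  intro hdvd
  have := Nat.le_of_dvd (by omega) hdvd
  omega

lemma factor_eq_zero {a n : ℕ} (h1 : a < p) (h2 : p ≤ a + n) :
    (∏ t ∈ Finset.range n, ((a + t + 1 : ℕ) : k)) = 0 := by
  apply Finset.prod_eq_zero (i := p - a - 1)
  · rw [Finset.mem_range]; omega
  · have : a + (p - a - 1) + 1 = p := by omega
    rw [this, CharP.cast_eq_zero]

lemma monomial_mem_ideal {m : Fin 2 →₀ ℕ} {c : k} (h : p ≤ m 0 ∨ p ≤ m 1) :
    monomial m c ∈ TruncIdeal k p := by
  obtain ⟨i, hi, hgen⟩ : ∃ i : Fin 2, p ≤ m i ∧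
      (X i ^ p : MvPolynomial (Fin 2) k) ∈ ({X 0 ^ p, X 1 ^ p} : Set (MvPolynomial (Fin 2) k)) := by
    rcases h with h | h
    · exact ⟨0, h, by simp⟩
    · exact ⟨1, h, by simp⟩
  have key : monomial m c = X i ^ p * monomial (m - single i p) c := by
    rw [X_pow_eq_monomial, monomial_mul, one_mul, add_tsub_cancel_of_le]
    rwa [Finsupp.single_le_iff]
  rw [key]
  exact Ideal.mul_mem_right _ _ (Ideal.subset_span hgen)

lemma mem_ideal_iff {f : MvPolynomial (Fin 2) k} :
    f ∈ TruncIdeal k p ↔ ∀ m : Fin 2 →₀ ℕ, m 0 < p → m 1 < p → coeff m f = 0 := by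
  constructor
  · intro hf m h0 h1
    rw [TruncIdeal, Ideal.mem_span_pair] at hf
    obtain ⟨a, b, rfl⟩ := hf
    have key : ∀ (i : Fin 2) (g : MvPolynomial (Fin 2) k), m i < p →
        coeff m (g * X i ^ p) = 0 := by
      intro i g hip
      rw [X_pow_eq_monomial, coeff_mul_monomial', if_neg]
      rw [Finsupp.single_le_iff]
      omega
    rw [coeff_add, key 0 a h0, key 1 b h1, add_zero]
  · intro hco
    rw [f.as_sum]
    apply Ideal.sum_mem
    intro v hv
    by_cases hsm : v 0 < p ∧ v 1 < p
    · rw [hco v hsm.1 hsm.2]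
      simp
    · exact monomial_mem_ideal (by omega)

lemma quot_zero_iff {f : MvPolynomial (Fin 2) k} :
    Ideal.Quotient.mk (TruncIdeal k p) f = 0 ↔
      ∀ m : Fin 2 →₀ ℕ, m 0 < p → m 1 < p → coeff m f = 0 := by
  rw [Ideal.Quotient.eq_zero_iff_mem, mem_ideal_iff]


lemma pderiv_mem_ideal {f : MvPolynomial (Fin 2) k} (i : Fin 2) (g : MvPolynomial (Fin 2) k)
    (hf : f ∈ TruncIdeal k p) : g * pderiv i f ∈ TruncIdeal k p := by
  rw [TruncIdeal, Ideal.mem_span_pair] at hf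
  obtain ⟨a, b, rfl⟩ := hf
  have hX : ∀ j : Fin 2, pderiv i ((X j : MvPolynomial (Fin 2) k) ^ p) = 0 := by
    intro j
    rw [Derivation.leibniz_pow]
    have : (p : MvPolynomial (Fin 2) k) = 0 := CharP.cast_eq_zero _ p
    rw [(Nat.cast_smul_eq_nsmul (MvPolynomial (Fin 2) k) p _).symm, this, zero_smul]
  rw [map_add, Derivation.leibniz, Derivation.leibniz, hX 0, hX 1]
  simp only [smul_eq_mul, mul_zero, add_zero, zero_add]
  rw [mul_add]
  apply Ideal.add_mem
  · rw [TruncIdeal, Ideal.mem_span_pair]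
    exact ⟨g * pderiv i a, 0, by ring⟩
  · rw [TruncIdeal, Ideal.mem_span_pair]
    exact ⟨0, g * pderiv i b, by ring⟩


/-- The linear map `f ↦ π (g * ∂ᵢ f)`. -/
noncomputable def derLin (g : MvPolynomial (Fin 2) k) (i : Fin 2) :
    MvPolynomial (Fin 2) k →ₗ[k] TruncA k p :=
  (Ideal.Quotient.mkₐ k (TruncIdeal k p)).toLinearMap ∘ₗ
    (LinearMap.mulLeft k g) ∘ₗ ((pderiv i : Derivation k _ _) : MvPolynomial (Fin 2) k →ₗ[k] _)

lemma derLin_apply (g : MvPolynomial (Fin 2) k) (i : Fin 2) (f : MvPolynomial (Fin 2) k) :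
    derLin g i f = Ideal.Quotient.mk (TruncIdeal k p) (g * pderiv i f) := rfl


/-- Underlying linear map of the derivation. -/
noncomputable def myDerLM (g : MvPolynomial (Fin 2) k) (i : Fin 2) :
    TruncA k p →ₗ[k] TruncA k p :=
  (Submodule.liftQ ((TruncIdeal k p).restrictScalars k) (derLin g i) (by
      intro f hf
      rw [Submodule.restrictScalars_mem] at hf
      rw [LinearMap.mem_ker, derLin_apply, Ideal.Quotient.eq_zero_iff_mem]
      exact pderiv_mem_ideal i g hf)) ∘ₗ
    (Submodule.Quotient.restrictScalarsEquiv k (TruncIdeal k p)).symm.toLinearMap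

lemma myDerLM_apply (g : MvPolynomial (Fin 2) k) (i : Fin 2) (f : MvPolynomial (Fin 2) k) :
    myDerLM g i (Ideal.Quotient.mk (TruncIdeal k p) f) =
      Ideal.Quotient.mk (TruncIdeal k p) (g * pderiv i f) := by
  rw [myDerLM, LinearMap.comp_apply, LinearEquiv.coe_toLinearMap]
  rw [show Ideal.Quotient.mk (TruncIdeal k p) f = Submodule.Quotient.mk f from rfl]
  rw [Submodule.Quotient.restrictScalarsEquiv_symm_mk, Submodule.liftQ_apply, derLin_apply]

/-- The derivation `π f ↦ π (g * ∂ᵢ f)` of `A`. -/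
noncomputable def myDer (g : MvPolynomial (Fin 2) k) (i : Fin 2) :
    Derivation k (TruncA k p) (TruncA k p) where
  toLinearMap := myDerLM g i
  map_one_eq_zero' := by
    show myDerLM g i (Ideal.Quotient.mk (TruncIdeal k p) 1) = 0
    rw [myDerLM_apply]
    simp
  leibniz' := by
    intro x y
    obtain ⟨f, rfl⟩ := Ideal.Quotient.mk_surjective x
    obtain ⟨h, rfl⟩ := Ideal.Quotient.mk_surjective y
    show myDerLM g i _ = _ • myDerLM g i _ + _ • myDerLM g i _
    rw [← map_mul, myDerLM_apply, myDerLM_apply, myDerLM_apply, pderiv_mul]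
    rw [smul_eq_mul, smul_eq_mul, ← map_mul, ← map_mul, ← map_add]
    congr 1
    ring

lemma myDer_apply (g : MvPolynomial (Fin 2) k) (i : Fin 2) (f : MvPolynomial (Fin 2) k) :
    myDer g i (Ideal.Quotient.mk (TruncIdeal k p) f) =
      Ideal.Quotient.mk (TruncIdeal k p) (g * pderiv i f) := myDerLM_apply g i f


lemma mk_C (c : k) :
    Ideal.Quotient.mk (TruncIdeal k p) (C c) = c • (1 : TruncA k p) := by
  rw [show (C c : MvPolynomial (Fin 2) k) = algebraMap k _ c from rfl,
    Ideal.Quotient.mk_algebraMap, Algebra.algebraMap_eq_smul_one]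

lemma coeff_X_mul_pderiv (l : Fin 2) (g : MvPolynomial (Fin 2) k) (m : Fin 2 →₀ ℕ) :
    coeff m (X l * pderiv l g) = ((m l : ℕ) : k) * coeff m g := by
  classical
  rw [coeff_X_mul']
  by_cases hml : l ∈ m.support
  · rw [if_pos hml, coeff_pderiv]
    rw [Finsupp.mem_support_iff] at hml
    have h1 : (m - single l (1:ℕ)) l = m l - 1 := by
      rw [Finsupp.tsub_apply, Finsupp.single_eq_same]
    have h2 : m - single l 1 + single l 1 = m := by
      rw [tsub_add_cancel_of_le]
      rw [Finsupp.single_le_iff]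
      omega
    rw [h1, h2]
    congr 2
    omega
  · rw [if_neg hml]
    rw [Finsupp.notMem_support_iff] at hml
    rw [hml]
    simp


section Main

variable {V : Submodule k (TruncA k p)}
  (hV : ∀ D : Derivation k (TruncA k p) (TruncA k p), ∀ v ∈ V, D v ∈ V)

include hV

lemma iterate_mem {f : MvPolynomial (Fin 2) k}
    (hf : Ideal.Quotient.mk (TruncIdeal k p) f ∈ V) (i : Fin 2) (n : ℕ) :
    Ideal.Quotient.mk (TruncIdeal k p) ((pderiv i)^[n] f) ∈ V := by
  induction n with
  | zero => exact hf
  | succ n ih =>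
    rw [Function.iterate_succ_apply']
    have := hV (myDer 1 i) _ ih
    rwa [myDer_apply, one_mul] at this

lemma exists_X_mem {v : TruncA k p} (hvV : v ∈ V)
    (hv : v ∉ Submodule.span k {(1 : TruncA k p)}) :
    ∃ i : Fin 2, Ideal.Quotient.mk (TruncIdeal k p) (X i) ∈ V := by
  obtain ⟨f, rfl⟩ := Ideal.Quotient.mk_surjective v
  classical
  set S : Finset (Fin 2 →₀ ℕ) :=
    f.support.filter (fun m => m 0 < p ∧ m 1 < p ∧ m ≠ 0) with hS
  have hSne : S.Nonempty := by
    by_contra hne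
    apply hv
    rw [Finset.not_nonempty_iff_eq_empty] at hne
    have hzero : Ideal.Quotient.mk (TruncIdeal k p) (f - C (coeff 0 f)) = 0 := by
      rw [quot_zero_iff]
      intro m h0 h1
      rcases eq_or_ne m 0 with rfl | hm
      · simp
      · rw [coeff_sub, coeff_C, if_neg (by exact fun h => hm h.symm), sub_zero]
        by_contra hc
        have : m ∈ S := by
          rw [hS, Finset.mem_filter, MvPolynomial.mem_support_iff]
          exact ⟨hc, h0, h1, hm⟩
        rw [hne] at this
        simp at this
    have : Ideal.Quotient.mk (TruncIdeal k p) f =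
        (coeff 0 f) • (1 : TruncA k p) := by
      rw [map_sub, sub_eq_zero] at hzero
      rw [hzero, mk_C]
    rw [this]
    exact Submodule.smul_mem _ _ (Submodule.mem_span_singleton_self _)
  obtain ⟨mm, hmmS, hmax⟩ := S.exists_max_image (fun m => m 0 + m 1) hSne
  rw [hS, Finset.mem_filter, MvPolynomial.mem_support_iff] at hmmS
  obtain ⟨hfc, h0p, h1p, hmne⟩ := hmmS
  -- pick the coordinate `l` where `mm l ≥ 1`
  have hl : ∃ l : Fin 2, 1 ≤ mm l := by
    by_contra hc
    push_neg at hc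
    have h0 : mm 0 = 0 := by have := hc 0; omega
    have h1 : mm 1 = 0 := by have := hc 1; omega
    apply hmne
    rw [fin2_eq mm, h0, h1]
    simp
  obtain ⟨l, hl1⟩ := hl
  refine ⟨l, ?_⟩
  obtain ⟨n0, n1, hmm_eq, he0, he1⟩ : ∃ n0 n1 : ℕ,
      mm = single l 1 + (single 0 n0 + single 1 n1) ∧
      mm 0 = (single l (1:ℕ)) 0 + n0 ∧ mm 1 = (single l (1:ℕ)) 1 + n1 := by
    rcases fin2_or l with rfl | rfl
    · refine ⟨mm 0 - 1, mm 1, ?_, by simp; omega, by simp⟩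
      rw [fin2_eq mm]
      ext a
      rcases fin2_or a with rfl | rfl <;>
        simp [Finsupp.single_apply] <;> omega
    · refine ⟨mm 0, mm 1 - 1, ?_, by simp, by simp; omega⟩
      rw [fin2_eq mm]
      ext a
      rcases fin2_or a with rfl | rfl <;>
        simp [Finsupp.single_apply] <;> omega
  have hsl : (single l (1:ℕ)) 0 + (single l (1:ℕ)) 1 = 1 := by
    rcases fin2_or l with rfl | rfl <;> simp
  set g : MvPolynomial (Fin 2) k := (pderiv (0 : Fin 2))^[n0] ((pderiv (1 : Fin 2))^[n1] f)
    with hg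
  have hgV : Ideal.Quotient.mk (TruncIdeal k p) g ∈ V :=
    iterate_mem hV (iterate_mem hV hvV 1 n1) 0 n0
  have hsum : ∀ m : Fin 2 →₀ ℕ,
      (m + single (0 : Fin 2) n0 + single (1 : Fin 2) n1) 0 = m 0 + n0 ∧
      (m + single (0 : Fin 2) n0 + single (1 : Fin 2) n1) 1 = m 1 + n1 := by
    intro m
    constructor <;> simp
  set α : k := coeff (single l 1) g with hα
  have hαne : α ≠ 0 := by
    rw [hα, hg, coeff_D2]
    have htarget : single l 1 + single (0 : Fin 2) n0 + single (1 : Fin 2) n1 = mm := by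
      rw [hmm_eq, add_assoc]
    rw [htarget]
    apply mul_ne_zero
    · exact factor_ne_zero (p := p) (by omega)
    · exact mul_ne_zero (factor_ne_zero (p := p) (by omega)) hfc
  -- coefficients of `g` at small monomials of degree ≥ 2 vanish
  have hbig : ∀ m : Fin 2 →₀ ℕ, m 0 < p → m 1 < p → 2 ≤ m 0 + m 1 → coeff m g = 0 := by
    intro m h0 h1 h2
    rw [hg, coeff_D2]
    by_cases hc0 : p ≤ m 0 + n0
    · rw [factor_eq_zero h0 hc0, zero_mul]
    by_cases hc1 : p ≤ m 1 + n1
    · rw [factor_eq_zero h1 hc1, zero_mul, mul_zero]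
    push_neg at hc0 hc1
    have hcz : coeff (m + single (0 : Fin 2) n0 + single (1 : Fin 2) n1) f = 0 := by
      by_contra hcne
      have hmem : (m + single (0 : Fin 2) n0 + single (1 : Fin 2) n1) ∈ S := by
        rw [hS, Finset.mem_filter, MvPolynomial.mem_support_iff]
        refine ⟨hcne, ?_, ?_, ?_⟩
        · rw [(hsum m).1]; exact hc0
        · rw [(hsum m).2]; exact hc1
        · intro hzero
          have h00 := congrArg (fun q : Fin 2 →₀ ℕ => q 0) hzero
          rw [(hsum m).1] at h00
          have h11 := congrArg (fun q : Fin 2 →₀ ℕ => q 1) hzero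
          rw [(hsum m).2] at h11
          simp only [Finsupp.coe_zero, Pi.zero_apply] at h00 h11
          omega
      have := hmax _ hmem
      simp only [(hsum m).1, (hsum m).2] at this
      omega
    rw [hcz, mul_zero, mul_zero]
  -- now apply the derivation `X l ∂ₗ`
  have hkey : Ideal.Quotient.mk (TruncIdeal k p) (X l * pderiv l g) =
      α • Ideal.Quotient.mk (TruncIdeal k p) (X l) := by
    have : α • Ideal.Quotient.mk (TruncIdeal k p) (X l) =
        Ideal.Quotient.mk (TruncIdeal k p) (C α * X l) := by
      rw [map_mul, mk_C, smul_mul_assoc, one_mul]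
    rw [this, ← sub_eq_zero, ← map_sub, quot_zero_iff]
    intro m h0 h1
    rw [coeff_sub, coeff_X_mul_pderiv]
    have hCX : coeff m (C α * X l) = if single l 1 = m then α else 0 := by
      rw [show (C α * X l : MvPolynomial (Fin 2) k) = monomial (single l 1) α by
        rw [X, C_mul_monomial, mul_one], coeff_monomial]
    rw [hCX]
    rcases eq_or_ne (single l (1:ℕ)) m with rfl | hm
    · rw [if_pos rfl]
      simp [hα]
    · rw [if_neg hm, sub_zero]
      rcases Nat.eq_zero_or_pos (m l) with hml | hml
      · rw [hml]; simp
      · have h2 : 2 ≤ m 0 + m 1 := by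
          by_contra hcon
          push_neg at hcon
          apply hm
          have hle : m l ≤ m 0 + m 1 := by
            rcases fin2_or l with rfl | rfl <;> omega
          have hml1 : m l = 1 := by omega
          rcases fin2_or l with rfl | rfl
          · have hm1 : m 1 = 0 := by omega
            rw [fin2_eq m, hml1, hm1]
            simp
          · have hm0 : m 0 = 0 := by omega
            rw [fin2_eq m, hml1, hm0]
            simp
        rw [hbig m h0 h1 h2, mul_zero]
  have hXl := hV (myDer (X l) l) _ hgV
  rw [myDer_apply, hkey] at hXl
  have := Submodule.smul_mem V α⁻¹ hXl
  rwa [smul_smul, inv_mul_cancel₀ hαne, one_smul] at this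

lemma top_of_X_mem {l : Fin 2}
    (hX : Ideal.Quotient.mk (TruncIdeal k p) (X l) ∈ V) : V = ⊤ := by
  have hmono : ∀ v : Fin 2 →₀ ℕ,
      Ideal.Quotient.mk (TruncIdeal k p) (X 0 ^ (v 0) * X 1 ^ (v 1)) ∈ V := by
    intro v
    have := hV (myDer (X 0 ^ (v 0) * X 1 ^ (v 1)) l) _ hX
    rwa [myDer_apply, pderiv_X_self, mul_one] at this
  rw [eq_top_iff]
  intro w _
  obtain ⟨f, rfl⟩ := Ideal.Quotient.mk_surjective w
  rw [f.as_sum, map_sum]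
  apply Submodule.sum_mem
  intro v hvs
  have hmon : (monomial v (coeff v f) : MvPolynomial (Fin 2) k) =
      (coeff v f) • (X 0 ^ (v 0) * X 1 ^ (v 1)) := by
    rw [X_pow_eq_monomial, X_pow_eq_monomial, monomial_mul, one_mul, ← fin2_eq,
      smul_monomial, smul_eq_mul, mul_one]
  rw [hmon]
  have : Ideal.Quotient.mk (TruncIdeal k p) ((coeff v f) • (X 0 ^ (v 0) * X 1 ^ (v 1)))
      = (coeff v f) • Ideal.Quotient.mk (TruncIdeal k p) (X 0 ^ (v 0) * X 1 ^ (v 1)) := by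
    rw [← Ideal.Quotient.mkₐ_eq_mk k, map_smul]
  rw [this]
  exact Submodule.smul_mem _ _ (hmono v)

end Main

section Basis

variable (k p)

/-- The standard basis of the truncated algebra. -/
noncomputable def truncBasisFun : Fin p × Fin p → TruncA k p := fun q =>
  Ideal.Quotient.mk (TruncIdeal k p)
    (monomial (single 0 (q.1 : ℕ) + single 1 (q.2 : ℕ)) (1 : k))

variable {k p}

lemma sigma_apply (q : Fin p × Fin p) :
    (single (0 : Fin 2) (q.1 : ℕ) + single (1 : Fin 2) (q.2 : ℕ)) 0 = (q.1 : ℕ) ∧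
    (single (0 : Fin 2) (q.1 : ℕ) + single (1 : Fin 2) (q.2 : ℕ)) 1 = (q.2 : ℕ) := by
  constructor <;> simp

lemma truncBasis_li : LinearIndependent k (truncBasisFun k p) := by
  classical
  rw [linearIndependent_iff']
  intro s c hsum q hq
  have hmk : Ideal.Quotient.mk (TruncIdeal k p)
      (∑ r ∈ s, monomial (single 0 (r.1 : ℕ) + single 1 (r.2 : ℕ)) (c r)) = 0 := by
    rw [← hsum, map_sum]
    apply Finset.sum_congr rfl
    intro r _
    rw [truncBasisFun, ← Ideal.Quotient.mkₐ_eq_mk k, ← map_smul, smul_monomial,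
      smul_eq_mul, mul_one]
  rw [quot_zero_iff] at hmk
  have := hmk (single 0 (q.1 : ℕ) + single 1 (q.2 : ℕ))
    (by rw [(sigma_apply q).1]; exact q.1.isLt)
    (by rw [(sigma_apply q).2]; exact q.2.isLt)
  rw [coeff_sum] at this
  rw [Finset.sum_eq_single q] at this
  · rwa [coeff_monomial, if_pos rfl] at this
  · intro r _ hrq
    rw [coeff_monomial, if_neg]
    intro hEq
    apply hrq
    have h0 := congrArg (fun m : Fin 2 →₀ ℕ => m 0) hEq
    have h1 := congrArg (fun m : Fin 2 →₀ ℕ => m 1) hEq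
    rw [(sigma_apply r).1, (sigma_apply q).1] at h0
    rw [(sigma_apply r).2, (sigma_apply q).2] at h1
    ext
    · exact Fin.val_injective h0 ▸ rfl
    · exact Fin.val_injective h1 ▸ rfl
  · intro hqs
    exact absurd hq hqs

lemma truncBasis_span : ⊤ ≤ Submodule.span k (Set.range (truncBasisFun k p)) := by
  intro w _
  obtain ⟨f, rfl⟩ := Ideal.Quotient.mk_surjective w
  rw [f.as_sum, map_sum]
  apply Submodule.sum_mem
  intro v _
  by_cases hsm : v 0 < p ∧ v 1 < p
  · have hv : v = single (0 : Fin 2) ((⟨v 0, hsm.1⟩ : Fin p) : ℕ) +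
        single (1 : Fin 2) ((⟨v 1, hsm.2⟩ : Fin p) : ℕ) := fin2_eq v
    have : Ideal.Quotient.mk (TruncIdeal k p) (monomial v (coeff v f)) =
        (coeff v f) • truncBasisFun k p (⟨v 0, hsm.1⟩, ⟨v 1, hsm.2⟩) := by
      rw [truncBasisFun, ← Ideal.Quotient.mkₐ_eq_mk k, ← map_smul, smul_monomial,
        smul_eq_mul, mul_one]
      congr 1
      exact hv ▸ rfl
    rw [this]
    exact Submodule.smul_mem _ _ (Submodule.subset_span ⟨_, rfl⟩)
  · have : Ideal.Quotient.mk (TruncIdeal k p) (monomial v (coeff v f)) = 0 := by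
      rw [Ideal.Quotient.eq_zero_iff_mem]
      exact monomial_mem_ideal (by omega)
    rw [this]
    exact Submodule.zero_mem _

variable (k p)

/-- Monomial basis of the truncated algebra. -/
noncomputable def truncBasis : Module.Basis (Fin p × Fin p) k (TruncA k p) :=
  Module.Basis.mk truncBasis_li truncBasis_span

lemma finrank_truncA : Module.finrank k (TruncA k p) = p ^ 2 := by
  rw [Module.finrank_eq_card_basis (truncBasis k p), Fintype.card_prod, Fintype.card_fin, sq]

lemma truncA_one_ne_zero : (1 : TruncA k p) ≠ 0 := by
  have hp : 0 < p := Nat.Prime.pos (Fact.out)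
  intro h
  rw [show (1 : TruncA k p) = Ideal.Quotient.mk (TruncIdeal k p) 1 from rfl,
    quot_zero_iff] at h
  have := h 0 hp hp
  simp at this

end Basis


end Stmt14Aux

/-- The only `Der(A)`-submodules of `A = k[x,y]/(x^p,y^p)` (char `p ≥ 5`) are `0`,
the constants `k·1`, and `A`; consequently `A/(k·1)` is a simple `Der(A)`-module of
dimension `p² - 1`. -/
theorem stmt14 {k : Type*} [Field k] (p : ℕ) [Fact p.Prime] (hp : 5 ≤ p) [CharP k p] :
    (∀ V : Submodule k (TruncA k p),
      (∀ D : Derivation k (TruncA k p) (TruncA k p), ∀ v ∈ V, D v ∈ V) →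
      V = ⊥ ∨ V = Submodule.span k {(1 : TruncA k p)} ∨ V = ⊤) ∧
    Module.finrank k (TruncA k p ⧸ Submodule.span k {(1 : TruncA k p)}) = p ^ 2 - 1 := by

  constructor
  · intro V hV
    by_cases hle : V ≤ Submodule.span k {(1 : TruncA k p)}
    · by_cases hbot : V = ⊥
      · exact Or.inl hbot
      · refine Or.inr (Or.inl (le_antisymm hle ?_))
        obtain ⟨v, hvV, hvne⟩ := V.ne_bot_iff.mp hbot
        obtain ⟨c, hc⟩ := Submodule.mem_span_singleton.mp (hle hvV)
        have hcne : c ≠ 0 := by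
          rintro rfl
          rw [zero_smul] at hc
          exact hvne hc.symm
        rw [Submodule.span_le, Set.singleton_subset_iff]
        have := Submodule.smul_mem V c⁻¹ hvV
        rw [← hc, smul_smul, inv_mul_cancel₀ hcne, one_smul] at this
        exact this
    · obtain ⟨v, hvV, hv⟩ := SetLike.not_le_iff_exists.mp hle
      obtain ⟨i, hXi⟩ := Stmt14Aux.exists_X_mem hV hvV hv
      exact Or.inr (Or.inr (Stmt14Aux.top_of_X_mem hV hXi))
  · have h1 : FiniteDimensional k (TruncA k p) :=
      Module.Finite.of_basis (Stmt14Aux.truncBasis k p)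
    have h2 := Submodule.finrank_quotient_add_finrank
      (Submodule.span k {(1 : TruncA k p)})
    rw [Stmt14Aux.finrank_truncA] at h2
    have h3 : Module.finrank k (Submodule.span k {(1 : TruncA k p)}) = 1 :=
      finrank_span_singleton (Stmt14Aux.truncA_one_ne_zero k p)
    rw [h3] at h2
    omega
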